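/- Suppose y : Fin d → Y has the property that any two coordinates lying in the same H-orbit are equal, i.e. for all i, j : Fin d, if there exists h ∈ H with h • y i = y j, then y i = y j. Then the stabilizer of y under the wreath-product action of H ≀ S_d on Fin d → Y is exactly the set { (h, σ) | (∀ i, h i • y i = y i) ∧ (∀ i, y (σ i) = y i) }. -/

import Mathlib

/-! The wreath product `H ≀ S_d := (Fin d → H) ⋊ Equiv.Perm (Fin d)`, acting on
`Fin d → Y` for a left `H`-set `Y`. -/

/-- The action of `Equiv.Perm (Fin d)` on `Fin d → H` by `(σ • h) i = h (σ⁻¹ i)`,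
as a monoid homomorphism into `MulAut (Fin d → H)`. -/
def permMulAut (H : Type*) [Group H] (d : ℕ) :
    Equiv.Perm (Fin d) →* MulAut (Fin d → H) where
  toFun σ :=
    { toFun := fun h i => h (σ⁻¹ i)
      invFun := fun h i => h (σ i)
      left_inv := fun h => by funext i; simp
      right_inv := fun h => by funext i; simp
      map_mul' := fun h h' => rfl }
  map_one' := by ext h i; simp
  map_mul' := fun σ τ => by ext h i; simp [mul_inv_rev]

@[simp] theorem permMulAut_apply {H : Type*} [Group H] {d : ℕ}
    (σ : Equiv.Perm (Fin d)) (h : Fin d → H) (i : Fin d) :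
    permMulAut H d σ h i = h (σ⁻¹ i) := rfl

/-- The wreath product `H ≀ S_d`, with multiplication
`(h, σ) * (h', σ') = (fun i => h i * h' (σ⁻¹ i), σ * σ')`. -/
abbrev WreathProduct (H : Type*) [Group H] (d : ℕ) :=
  SemidirectProduct (Fin d → H) (Equiv.Perm (Fin d)) (permMulAut H d)

section Action

variable {H Y : Type*} [Group H] [MulAction H Y] {d : ℕ}

instance : SMul (WreathProduct H d) (Fin d → Y) :=
  ⟨fun g y i => g.left i • y (g.right⁻¹ i)⟩

@[simp] theorem WreathProduct.smul_apply (g : WreathProduct H d) (y : Fin d → Y) (i : Fin d) :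
    (g • y) i = g.left i • y (g.right⁻¹ i) := rfl

/-- The wreath product `H ≀ S_d` acts on `Fin d → Y` by `((h, σ) • y) i = h i • y (σ⁻¹ i)`. -/
instance : MulAction (WreathProduct H d) (Fin d → Y) where
  one_smul y := by funext i; simp
  mul_smul a b y := by
    funext i
    simp [SemidirectProduct.mul_left, SemidirectProduct.mul_right, mul_inv_rev, mul_smul]

end Action

/-- If any two coordinates of `y : Fin d → Y` lying in the same `H`-orbit are equal, then
the stabilizer of `y` under the wreath-product action of `H ≀ S_d` on `Fin d → Y` is
exactly `{(h, σ) | (∀ i, h i • y i = y i) ∧ (∀ i, y (σ i) = y i)}`. -/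
theorem mem_stabilizer_wreath_iff
    {H Y : Type*} [Group H] [MulAction H Y] {d : ℕ} (y : Fin d → Y)
    (hy : ∀ i j : Fin d, (∃ h : H, h • y i = y j) → y i = y j) :
    ∀ w : WreathProduct H d, w ∈ MulAction.stabilizer (WreathProduct H d) y ↔
      ((∀ i : Fin d, w.left i • y i = y i) ∧ (∀ i : Fin d, y (w.right i) = y i)) := by
  intro w
  constructor
  · intro hw
    have key : ∀ i, w.left i • y (w.right⁻¹ i) = y i := by
      intro i
      have := congrFun (MulAction.mem_stabilizer_iff.mp hw) i
      simpa using this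
    have horb : ∀ i, y (w.right⁻¹ i) = y i := fun i => hy _ _ ⟨w.left i, key i⟩
    constructor
    · intro i
      have := key i
      rwa [horb i] at this
    · intro i
      have := horb (w.right i)
      simpa using this.symm
  · rintro ⟨h1, h2⟩
    apply MulAction.mem_stabilizer_iff.mpr
    funext i
    have : y (w.right⁻¹ i) = y i := by
      have := h2 (w.right⁻¹ i)
      simpa using this.symm
    rw [WreathProduct.smul_apply, this, h1 i]
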